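/- arXiv:1306.3508 — 3 statements merged into one kernel-verified Lean document; each statement's English description precedes it below -/
import Mathlib

section
/- Let (d₁, ..., dₙ) be an n-tuple of positive integers with even sum whose largest entry is d. If n ≥ d², then (d₁, ..., dₙ) is graphic, i.e., there exists a finite simple graph on n vertices whose vertex degrees are exactly d₁, ..., dₙ. -/
open Finset

open Finset

lemma sg_deg_eq {V : Type*} [Fintype V] (G : SimpleGraph V) [DecidableRel G.Adj] (v : V) :
    (G.neighborSet v).ncard = G.degree v := by
  rw [SimpleGraph.degree, SimpleGraph.neighborFinset_def, Set.ncard_eq_toFinset_card']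

lemma sg_add_edge {V : Type*} (G : SimpleGraph V) (i j : V) (hij : i ≠ j) (h : ¬ G.Adj i j) :
    ∃ G' : SimpleGraph V,
      (∀ w, w ≠ i → w ≠ j → G'.neighborSet w = G.neighborSet w) ∧
      G'.neighborSet i = insert j (G.neighborSet i) ∧
      G'.neighborSet j = insert i (G.neighborSet j) := by
  have hsymm : ∀ a b : V, G.Adj a b ↔ G.Adj b a := fun a b => ⟨fun h => h.symm, fun h => h.symm⟩
  refine ⟨G ⊔ SimpleGraph.edge i j, fun w hwi hwj => ?_, ?_, ?_⟩ <;>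
  · ext b
    simp only [SimpleGraph.mem_neighborSet, SimpleGraph.sup_adj, SimpleGraph.edge_adj,
      Set.mem_insert_iff]
    constructor
    · intro hx
      rcases hx with hx | ⟨hx | hx, hne⟩ <;>
        first
          | tauto
          | (obtain ⟨rfl, rfl⟩ := hx; tauto)
    · intro hx
      first | tauto | (rcases hx with rfl | hx <;> tauto)


lemma sg_swap {V : Type*} (G : SimpleGraph V) (i j u v : V)
    (huv : G.Adj u v) (hiu : ¬ G.Adj i u) (hjv : ¬ G.Adj j v)
    (hij : i ≠ j) (hiu' : i ≠ u) (hiv : i ≠ v) (hju : j ≠ u) (hjv' : j ≠ v) :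
    ∃ G' : SimpleGraph V,
      (∀ w, w ≠ i → w ≠ j → w ≠ u → w ≠ v → G'.neighborSet w = G.neighborSet w) ∧
      G'.neighborSet i = insert u (G.neighborSet i) ∧
      G'.neighborSet j = insert v (G.neighborSet j) ∧
      G'.neighborSet u = insert i (G.neighborSet u \ {v}) ∧
      G'.neighborSet v = insert j (G.neighborSet v \ {u}) := by
  have huv' : u ≠ v := huv.ne
  have hui : u ≠ i := hiu'.symm
  have hvi : v ≠ i := hiv.symm
  have huj : u ≠ j := hju.symm
  have hvj : v ≠ j := hjv'.symm
  have hvu : v ≠ u := huv'.symm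
  have hji : j ≠ i := hij.symm
  have hsymm : ∀ a b : V, G.Adj a b → G.Adj b a := fun a b h => h.symm
  have hne : ∀ a b : V, G.Adj a b → a ≠ b := fun a b h => h.ne
  set F : V → V → Prop := fun a b =>
    (G.Adj a b ∧ ¬((a = u ∧ b = v) ∨ (a = v ∧ b = u))) ∨
    ((a = i ∧ b = u) ∨ (a = u ∧ b = i)) ∨ ((a = j ∧ b = v) ∨ (a = v ∧ b = j)) with hF
  have Fsymm : Symmetric F := by
    intro a b h
    rw [hF] at *
    rcases h with ⟨h1, h2⟩ | h
    · exact Or.inl ⟨h1.symm, by tauto⟩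
    · exact Or.inr (by tauto)
  have Floop : Irreflexive F := by
    intro a h
    rw [hF] at h
    rcases h with ⟨h1, _⟩ | (⟨rfl, h⟩ | ⟨rfl, h⟩) | (⟨rfl, h⟩ | ⟨rfl, h⟩)
    · exact G.loopless.irrefl a h1
    all_goals simp_all
  refine ⟨⟨F, ⟨fun a b h => Fsymm h⟩, ⟨Floop⟩⟩, fun w h1 h2 h3 h4 => ?_, ?_, ?_, ?_, ?_⟩ <;>
  · ext b
    show F _ b ↔ _
    rw [hF]
    simp only [Set.mem_insert_iff, Set.mem_diff, Set.mem_singleton_iff,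
      SimpleGraph.mem_neighborSet]
    constructor
    · intro hx
      tauto
    · intro hx
      tauto


lemma sg_find_swap {n d : ℕ} (f : Fin n → ℕ) (G : SimpleGraph (Fin n)) [DecidableRel G.Adj]
    (i j : Fin n) (hij : i ≠ j) (hadj : G.Adj i j)
    (hdi : G.degree i + 1 = f i) (hdj : G.degree j + 1 = f j)
    (hdeg : ∀ w, w ≠ i → w ≠ j → G.degree w = f w)
    (hfd : ∀ w, f w ≤ d) (hfi : f i = d)
    (hcard : d ^ 2 ≤ (univ.filter fun w => 1 ≤ f w).card) :
    ∃ u v, G.Adj u v ∧ ¬G.Adj i u ∧ u ≠ i ∧ ¬G.Adj j v ∧ v ≠ j := by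
  by_contra hbad
  push_neg at hbad
  -- hbad : ∀ u v, G.Adj u v → ¬G.Adj i u → u ≠ i → ¬G.Adj j v → v = j
  set A : Finset (Fin n) := insert i (G.neighborFinset i) with hA
  set B : Finset (Fin n) := insert j (G.neighborFinset j) with hB
  set P : Finset (Fin n) := univ.filter fun w => 1 ≤ f w with hP
  set W : Finset (Fin n) := P \ (A ∪ B) with hW
  set I : Finset (Fin n) := (G.neighborFinset i).erase j with hI
  -- every w in W has all neighbors in I, in fact a neighbor in I
  have hWsub : W ⊆ I.biUnion fun x => G.neighborFinset x := by
    intro w hw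
    rw [hW, mem_sdiff, mem_union, hA, hB, hP, mem_filter] at hw
    obtain ⟨⟨-, hw1⟩, hw2⟩ := hw
    have hwi : w ≠ i := fun h => hw2 (Or.inl (by simp [h]))
    have hwj : w ≠ j := fun h => hw2 (Or.inr (by simp [h]))
    have hwni : ¬ G.Adj i w := fun h => hw2 (Or.inl (by simp [SimpleGraph.mem_neighborFinset, h]))
    have hwnj : ¬ G.Adj j w := fun h => hw2 (Or.inr (by simp [SimpleGraph.mem_neighborFinset, h]))
    have hdw : 1 ≤ G.degree w := by rw [hdeg w hwi hwj]; exact hw1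
    obtain ⟨x, hx⟩ := Finset.card_pos.mp hdw
    rw [SimpleGraph.mem_neighborFinset] at hx
    -- x is a neighbor of w
    have h1 : G.Adj j x ∨ x = j := by
      by_contra hc
      push_neg at hc
      exact hc.2 (hbad w x hx (fun h => hwni h) hwi (fun h => hc.1 h))
    have h2 : G.Adj i x ∨ x = i := by
      by_contra hc
      push_neg at hc
      exact hwj (hbad x w hx.symm hc.1 hc.2 hwnj)
    have hxj : x ≠ j := fun h => hwnj (h ▸ hx).symm
    have hxi : x ≠ i := fun h => hwni (h ▸ hx).symm
    have hjx : G.Adj j x := h1.resolve_right hxj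
    have hix : G.Adj i x := h2.resolve_right hxi
    rw [mem_biUnion]
    exact ⟨x, by rw [hI, mem_erase, SimpleGraph.mem_neighborFinset]; exact ⟨hxj, hix⟩,
      by rw [SimpleGraph.mem_neighborFinset]; exact hx.symm⟩
  -- cardinalities
  have hd2 : 2 ≤ d := by
    have hmem : j ∈ G.neighborFinset i := by rw [SimpleGraph.mem_neighborFinset]; exact hadj
    have h1 : 1 ≤ G.degree i := by
      rw [← SimpleGraph.card_neighborFinset_eq_degree]
      exact Finset.card_pos.mpr ⟨j, hmem⟩
    omega
  have hcardA : A.card = d := by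
    rw [hA, card_insert_of_notMem (by simp), SimpleGraph.card_neighborFinset_eq_degree]
    omega
  have hcardB : B.card ≤ d := by
    rw [hB, card_insert_of_notMem (by simp), SimpleGraph.card_neighborFinset_eq_degree]
    have := hfd j
    omega
  have hIJsub : ({i, j} : Finset (Fin n)) ⊆ A ∩ B := by
    intro x hx
    rw [mem_insert, mem_singleton] at hx
    rw [mem_inter, hA, hB, mem_insert, mem_insert, SimpleGraph.mem_neighborFinset,
      SimpleGraph.mem_neighborFinset]
    rcases hx with rfl | rfl
    · exact ⟨Or.inl rfl, Or.inr hadj.symm⟩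
    · exact ⟨Or.inr hadj, Or.inl rfl⟩
  have hcardAB : 2 ≤ (A ∩ B).card := by
    have := card_le_card hIJsub
    rwa [card_insert_of_notMem (by simp [hij]), card_singleton] at this
  have hcardAuB : (A ∪ B).card + 2 ≤ 2 * d := by
    have := Finset.card_union_add_card_inter A B
    omega
  have hcardI : I.card + 2 ≤ d := by
    rw [hI, card_erase_of_mem (by rw [SimpleGraph.mem_neighborFinset]; exact hadj),
      SimpleGraph.card_neighborFinset_eq_degree]
    omega
  have hWle : W.card ≤ I.card * d := by
    calc W.card ≤ (I.biUnion fun x => G.neighborFinset x).card := card_le_card hWsub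
    _ ≤ ∑ x ∈ I, (G.neighborFinset x).card := card_biUnion_le
    _ ≤ ∑ _x ∈ I, d := by
        refine Finset.sum_le_sum fun x hx => ?_
        rw [SimpleGraph.card_neighborFinset_eq_degree]
        rcases eq_or_ne x i with h | hxi
        · rw [h]; omega
        rcases eq_or_ne x j with h | hxj
        · rw [h]; have h2 := hfd j; omega
        · rw [hdeg x hxi hxj]; exact hfd x
    _ = I.card * d := by rw [Finset.sum_const, smul_eq_mul]
  have hWge : P.card ≤ W.card + (A ∪ B).card := Finset.card_le_card_sdiff_add_card
  have : d ^ 2 ≤ W.card + 2 * d - 2 := by omega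
  have hIWd : I.card * d ≤ (d - 2) * d := Nat.mul_le_mul_right d (by omega)
  have : d ^ 2 + 2 ≤ d * d := by
    have h1 : (d - 2) * d + 2 * d = d * d := by
      have : d - 2 + 2 = d := by omega
      calc (d - 2) * d + 2 * d = (d - 2 + 2) * d := by ring
      _ = d * d := by rw [this]
    omega
  simp [pow_two] at this




lemma sg_realize (s : ℕ) : ∀ (n : ℕ) (f : Fin n → ℕ) (d : ℕ), (∑ v, f v) = s → Even s →
    (∀ v, f v ≤ d) → d ^ 2 ≤ (univ.filter fun v => 1 ≤ f v).card →
    ∃ G : SimpleGraph (Fin n), ∀ v, (G.neighborSet v).ncard = f v := by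
  induction s using Nat.strong_induction_on with
  | _ s IH =>
  intro n f d hsum heven hfd hcard
  rcases Nat.eq_zero_or_pos n with rfl | hn
  · exact ⟨⊥, fun v => v.elim0⟩
  set m := univ.sup f with hm
  obtain ⟨i, -, him⟩ := Finset.exists_mem_eq_sup univ ⟨⟨0, hn⟩, mem_univ _⟩ f
  have hfm : ∀ v, f v ≤ m := fun v => Finset.le_sup (mem_univ v)
  have hmd : m ≤ d := Finset.sup_le fun v _ => hfd v
  have hcm : m ^ 2 ≤ (univ.filter fun v => 1 ≤ f v).card :=
    le_trans (Nat.pow_le_pow_left hmd 2) hcard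
  have hfim : f i = m := him.symm
  rcases Nat.eq_zero_or_pos m with hm0 | hm1
  · refine ⟨⊥, fun v => ?_⟩
    have h0 : f v = 0 := by have := hfm v; omega
    have hbot : (⊥ : SimpleGraph (Fin n)).neighborSet v = ∅ := by
      ext w; simp [SimpleGraph.neighborSet]
    rw [hbot, Set.ncard_empty, h0]
  -- find a second positive entry
  have hjex : ∃ jj, jj ≠ i ∧ 1 ≤ f jj := by
    by_contra hc
    push_neg at hc
    have hc' : ∀ jj, jj ≠ i → f jj = 0 := fun jj h => by have := hc jj h; omega
    have hsum' : ∑ v, f v = f i :=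
      Finset.sum_eq_single i (fun b _ hb => hc' b hb) (fun h => absurd (mem_univ i) h)
    have hPsub : (univ.filter fun v => 1 ≤ f v) ⊆ {i} := by
      intro w hw
      rw [mem_filter] at hw
      rw [mem_singleton]
      by_contra hne
      have := hc' w hne
      omega
    have hP1 : m ^ 2 ≤ 1 := le_trans hcm (le_trans (card_le_card hPsub) (by simp))
    have hmm : m ≤ m ^ 2 := Nat.le_self_pow (by norm_num) m
    have hm1' : m = 1 := by omega
    rw [hsum', hfim, hm1'] at hsum
    rw [← hsum] at heven
    simp at heven
  -- the reduced sequence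
  set F : Fin n → Fin n → ℕ :=
    fun j => Function.update (Function.update f i (f i - 1)) j (f j - 1) with hF
  have hFle : ∀ j v, F j v ≤ f v := by
    intro j v
    simp only [hF]
    rcases eq_or_ne v j with rfl | hvj
    · rw [Function.update_self]; omega
    rw [Function.update_of_ne hvj]
    rcases eq_or_ne v i with rfl | hvi
    · rw [Function.update_self]; omega
    · rw [Function.update_of_ne hvi]
  have hFi : ∀ j, j ≠ i → F j i = f i - 1 := fun j hj => by
    simp only [hF, Function.update_of_ne (Ne.symm hj), Function.update_self]
  have hFj : ∀ j, F j j = f j - 1 := fun j => by simp only [hF, Function.update_self]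
  have hFw : ∀ j w, w ≠ i → w ≠ j → F j w = f w := fun j w hwi hwj => by
    simp only [hF, Function.update_of_ne hwj, Function.update_of_ne hwi]
  have claim : ∃ j d', j ≠ i ∧ 1 ≤ f j ∧ (∀ v, F j v ≤ d') ∧
      d' ^ 2 ≤ (univ.filter fun v => 1 ≤ F j v).card := by
    rcases eq_or_lt_of_le (show 1 ≤ m from hm1) with hm1' | hm2
    · -- m = 1
      obtain ⟨j, hji, hj1⟩ := hjex
      refine ⟨j, if (univ.filter fun v => 1 ≤ F j v).card = 0 then 0 else 1, hji, hj1, ?_, ?_⟩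
      · intro v
        split
        · next h =>
          by_contra hc
          have hv : v ∈ univ.filter fun v => 1 ≤ F j v := by
            rw [mem_filter]; exact ⟨mem_univ v, by omega⟩
          rw [Finset.card_eq_zero] at h
          rw [h] at hv
          exact absurd hv (notMem_empty v)
        · have h1 := hFle j v
          have h2 := hfm v
          omega
      · split
        · simp
        · next h => simpa using Nat.one_le_iff_ne_zero.mpr h
    · -- m ≥ 2
      by_cases hsec : ∃ jj, jj ≠ i ∧ f jj = m
      · obtain ⟨j, hji, hjm⟩ := hsec
        refine ⟨j, m, hji, by omega, ?_, ?_⟩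
        · intro v
          exact le_trans (hFle j v) (hfm v)
        · refine le_trans hcm (card_le_card ?_)
          intro w hw
          rw [mem_filter] at hw ⊢
          refine ⟨mem_univ w, ?_⟩
          rcases eq_or_ne w j with h | hwj
          · rw [h, hFj]; have := hw.2; omega
          rcases eq_or_ne w i with h | hwi
          · rw [h, hFi j hji]; omega
          · rw [hFw j w hwi hwj]; exact hw.2
      · push_neg at hsec
        obtain ⟨j, hji, hj1⟩ := hjex
        have hlt : ∀ w, w ≠ i → f w ≤ m - 1 := by
          intro w hw
          have h1 := hsec w hw
          have h2 := hfm w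
          omega
        refine ⟨j, m - 1, hji, hj1, ?_, ?_⟩
        · intro v
          rcases eq_or_ne v i with h | hvi
          · rw [h, hFi j hji]; omega
          rcases eq_or_ne v j with h | hvj
          · rw [h, hFj]; have := hlt j hji; omega
          · rw [hFw j v hvi hvj]; exact hlt v hvi
        · have hsub : (univ.filter fun v => 1 ≤ f v).erase j ⊆
              univ.filter fun v => 1 ≤ F j v := by
            intro w hw
            rw [mem_erase, mem_filter] at hw
            obtain ⟨hwj, -, hw1⟩ := hw
            rw [mem_filter]
            refine ⟨mem_univ w, ?_⟩
            rcases eq_or_ne w i with h | hwi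
            · rw [h, hFi j hji]; omega
            · rw [hFw j w hwi hwj]; exact hw1
          have hje : j ∈ univ.filter fun v => 1 ≤ f v := by
            rw [mem_filter]; exact ⟨mem_univ j, hj1⟩
          have h1 := card_le_card hsub
          rw [card_erase_of_mem hje] at h1
          have h2 : (m - 1) ^ 2 + m ≤ m ^ 2 := by
            obtain ⟨k, hk⟩ := Nat.exists_eq_add_of_le hm1
            rw [hk]
            have hk2 : 1 + k - 1 = k := by omega
            rw [hk2]
            nlinarith
          omega
  obtain ⟨j, d', hji, hj1, hfd', hcard'⟩ := claim
  have hij : i ≠ j := hji.symm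
  -- sum of the reduced sequence
  have hsum1 : ∑ v ∈ univ.erase j, f v + f j = ∑ v, f v := Finset.sum_erase_add _ _ (mem_univ j)
  have hi_mem : i ∈ univ.erase j := mem_erase.mpr ⟨hij, mem_univ i⟩
  have hsum2 : ∑ v ∈ (univ.erase j).erase i, f v + f i = ∑ v ∈ univ.erase j, f v :=
    Finset.sum_erase_add _ _ hi_mem
  have hsA : ∑ v ∈ univ.erase j, F j v + F j j = ∑ v, F j v :=
    Finset.sum_erase_add _ _ (mem_univ j)
  have hsB : ∑ v ∈ (univ.erase j).erase i, F j v + F j i = ∑ v ∈ univ.erase j, F j v :=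
    Finset.sum_erase_add _ _ hi_mem
  have hsC : ∑ v ∈ (univ.erase j).erase i, F j v = ∑ v ∈ (univ.erase j).erase i, f v :=
    Finset.sum_congr rfl fun w hw => by
      rw [mem_erase, mem_erase] at hw
      exact hFw j w hw.1 hw.2.1
  have e1 : F j i = f i - 1 := hFi j hji
  have e2 : F j j = f j - 1 := hFj j
  have hstot : ∑ v, F j v + 2 = s := by
    rw [← hsum]
    omega
  obtain ⟨G, hG⟩ := IH (∑ v, F j v) (by omega) n (F j) d' rfl
    (by obtain ⟨k, hk⟩ := heven; exact ⟨k - 1, by omega⟩) hfd' hcard'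
  haveI : DecidableRel G.Adj := fun a b => Classical.propDecidable _
  have hdeg : ∀ v, G.degree v = F j v := fun v => by rw [← sg_deg_eq]; exact hG v
  by_cases hadj : G.Adj i j
  · obtain ⟨u, v, huv, hniu, huni, hnjv, hvnj⟩ :=
      sg_find_swap f G i j hij hadj
        (by rw [hdeg i, e1]; omega)
        (by rw [hdeg j, e2]; omega)
        (fun w hwi hwj => by rw [hdeg w, hFw j w hwi hwj]) hfm hfim hcm
    have huj : u ≠ j := fun h => hniu (by rw [h]; exact hadj)
    have hvi : v ≠ i := fun h => hnjv (by rw [h]; exact hadj.symm)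
    obtain ⟨G', hother, hNi, hNj, hNu, hNv⟩ :=
      sg_swap G i j u v huv hniu hnjv hij (Ne.symm huni) (Ne.symm hvi) (Ne.symm huj)
        (Ne.symm hvnj)
    refine ⟨G', fun w => ?_⟩
    rcases eq_or_ne w i with h | hwi
    · rw [h, hNi, Set.ncard_insert_of_notMem
        (fun hm => hniu ((SimpleGraph.mem_neighborSet G i u).mp hm)), hG i, e1]
      omega
    rcases eq_or_ne w j with h | hwj
    · rw [h, hNj, Set.ncard_insert_of_notMem
        (fun hm => hnjv ((SimpleGraph.mem_neighborSet G j v).mp hm)), hG j, e2]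
      omega
    rcases eq_or_ne w u with h | hwu
    · rw [h, hNu, Set.ncard_insert_of_notMem
        (fun hm => hniu ((SimpleGraph.mem_neighborSet G u i).mp hm.1).symm),
        Set.ncard_diff_singleton_add_one ((SimpleGraph.mem_neighborSet G u v).mpr huv),
        hG u, hFw j u huni huj]
    rcases eq_or_ne w v with h | hwv
    · rw [h, hNv, Set.ncard_insert_of_notMem
        (fun hm => hnjv ((SimpleGraph.mem_neighborSet G v j).mp hm.1).symm),
        Set.ncard_diff_singleton_add_one ((SimpleGraph.mem_neighborSet G v u).mpr huv.symm),
        hG v, hFw j v hvi hvnj]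
    · rw [hother w hwi hwj hwu hwv, hG w, hFw j w hwi hwj]
  · obtain ⟨G', hother, hNi, hNj⟩ := sg_add_edge G i j hij hadj
    refine ⟨G', fun w => ?_⟩
    rcases eq_or_ne w i with h | hwi
    · rw [h, hNi, Set.ncard_insert_of_notMem
        (fun hm => hadj ((SimpleGraph.mem_neighborSet G i j).mp hm)), hG i, e1]
      omega
    rcases eq_or_ne w j with h | hwj
    · rw [h, hNj, Set.ncard_insert_of_notMem
        (fun hm => hadj ((SimpleGraph.mem_neighborSet G j i).mp hm).symm), hG j, e2]
      omega
    · rw [hother w hwi hwj, hG w, hFw j w hwi hwj]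

/-- A positive `n`-tuple with even sum and largest entry `d` is graphic provided `n ≥ d²`:
there is a finite simple graph whose vertex degrees are exactly the entries of the tuple. -/
theorem graphic_of_length_ge_sq_max (d : ℕ) (D : List ℕ)
    (hpos : ∀ x ∈ D, 1 ≤ x)
    (heven : Even D.sum)
    (hd : d ∈ D) (hmax : ∀ x ∈ D, x ≤ d)
    (hn : d ^ 2 ≤ D.length) :
    ∃ G : SimpleGraph (Fin D.length),
      ∀ i : Fin D.length, (G.neighborSet i).ncard = D.get i := by
  have hsum : ∑ v : Fin D.length, D.get v = D.sum := by
    conv_rhs => rw [← List.ofFn_get D]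
    rw [List.sum_ofFn]
  have hfilter : (univ.filter fun v : Fin D.length => 1 ≤ D.get v) = univ :=
    Finset.filter_true_of_mem fun v _ => hpos _ (D.get_mem _)
  exact sg_realize D.sum D.length (fun v => D.get v) d hsum heven
    (fun v => hmax _ (D.get_mem _))
    (by rw [hfilter, card_univ, Fintype.card_fin]; exact hn)
end

section
/- Let (Q, ≤) be a quasi-order. The relation ≤ on Q-labelled graphic sequences (defined by D₁ ≤ D₂ iff there exist Q-labelled graphs G₁ realizing D₁ and G₂ realizing D₂ with G₁ a labelled induced subgraph of G₂) is transitive: if D₁ ≤ D₂ and D₂ ≤ D₃, then D₁ ≤ D₃. -/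
/-- A `Q`-labelled graph `(G, f)` on `Fin D.length` realizes the `Q`-labelled sequence `D`:
the degree of the `i`-th vertex is the `i`-th degree entry and its label is the `i`-th label. -/
def LabelledRealizes {Q : Type*} (D : List (ℕ × Q))
    (G : SimpleGraph (Fin D.length)) (f : Fin D.length → Q) : Prop :=
  ∀ i : Fin D.length, (G.neighborSet i).ncard = (D.get i).1 ∧ f i = (D.get i).2

/-- `(G, fG)` is a labelled induced subgraph of `(H, fH)`: there is an injection preserving
adjacency and non-adjacency, with labels increasing along it. -/
def LabelledInducedSubgraph {Q : Type*} [Preorder Q] {n m : ℕ}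
    (G : SimpleGraph (Fin n)) (fG : Fin n → Q)
    (H : SimpleGraph (Fin m)) (fH : Fin m → Q) : Prop :=
  ∃ φ : Fin n → Fin m, Function.Injective φ ∧
    (∀ x y : Fin n, G.Adj x y ↔ H.Adj (φ x) (φ y)) ∧
    (∀ x : Fin n, fG x ≤ fH (φ x))

/-- The order on `Q`-labelled graphic sequences: `D₁ ≤ D₂` iff some labelled realization of `D₁`
is a labelled induced subgraph of some labelled realization of `D₂`. -/
def LabelledSeqLE {Q : Type*} [Preorder Q] (D₁ D₂ : List (ℕ × Q)) : Prop :=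
  ∃ (G₁ : SimpleGraph (Fin D₁.length)) (f₁ : Fin D₁.length → Q)
    (G₂ : SimpleGraph (Fin D₂.length)) (f₂ : Fin D₂.length → Q),
      LabelledRealizes D₁ G₁ f₁ ∧ LabelledRealizes D₂ G₂ f₂ ∧
      LabelledInducedSubgraph G₁ f₁ G₂ f₂

/-- The relation `≤` on `Q`-labelled graphic sequences is transitive. -/
theorem labelledSeqLE_trans {Q : Type*} [Preorder Q] (D₁ D₂ D₃ : List (ℕ × Q))
    (h12 : LabelledSeqLE D₁ D₂) (h23 : LabelledSeqLE D₂ D₃) :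
    LabelledSeqLE D₁ D₃ := by
  classical
  obtain ⟨G₁, f₁, G₂, f₂, r₁, r₂, φ, hφi, hφa, hφl⟩ := h12
  obtain ⟨G₂', f₂', G₃, f₃, r₂', r₃, ψ, hψi, hψa, hψl⟩ := h23
  -- surgery: replace the copy of G₂' inside G₃ by a copy of G₂
  let H : SimpleGraph (Fin D₃.length) :=
  { Adj := fun x y => (∃ a b, ψ a = x ∧ ψ b = y ∧ G₂.Adj a b) ∨
      (G₃.Adj x y ∧ (x ∉ Set.range ψ ∨ y ∉ Set.range ψ))
    symm := by
      constructor
      rintro x y (⟨a, b, ha, hb, hab⟩ | ⟨h, hr⟩)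
      · exact Or.inl ⟨b, a, hb, ha, hab.symm⟩
      · exact Or.inr ⟨h.symm, hr.symm⟩
    loopless := by
      constructor
      rintro x (⟨a, b, ha, hb, hab⟩ | ⟨h, _⟩)
      · exact hab.ne (hψi (ha.trans hb.symm))
      · exact h.ne rfl }
  have key1 : ∀ a b, H.Adj (ψ a) (ψ b) ↔ G₂.Adj a b := by
    intro a b
    constructor
    · rintro (⟨a', b', ha, hb, hab⟩ | ⟨_, hr | hr⟩)
      · rwa [hψi ha, hψi hb] at hab
      · exact absurd ⟨a, rfl⟩ hr
      · exact absurd ⟨b, rfl⟩ hr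
    · exact fun h => Or.inl ⟨a, b, rfl, rfl, h⟩
  have key2 : ∀ x y, x ∉ Set.range ψ → (H.Adj x y ↔ G₃.Adj x y) := by
    intro x y hx
    constructor
    · rintro (⟨a, b, ha, hb, hab⟩ | ⟨h, _⟩)
      · exact absurd ⟨a, ha⟩ hx
      · exact h
    · exact fun h => Or.inr ⟨h, Or.inl hx⟩
  have key2' : ∀ x y, y ∉ Set.range ψ → (H.Adj x y ↔ G₃.Adj x y) := by
    intro x y hy
    rw [SimpleGraph.adj_comm, key2 y x hy, SimpleGraph.adj_comm]
  have hrealH : LabelledRealizes D₃ H f₃ := by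
    intro v
    refine ⟨?_, (r₃ v).2⟩
    by_cases hv : v ∈ Set.range ψ
    · obtain ⟨u, rfl⟩ := hv
      have hdisj : ∀ s : Set (Fin D₂.length),
          Disjoint (ψ '' s) (G₃.neighborSet (ψ u) \ Set.range ψ) := fun s =>
        Set.disjoint_right.mpr fun y hy hmem => hy.2 (Set.image_subset_range ψ s hmem)
      have hHn : H.neighborSet (ψ u)
          = (ψ '' G₂.neighborSet u) ∪ (G₃.neighborSet (ψ u) \ Set.range ψ) := by
        ext y
        by_cases hy : y ∈ Set.range ψ
        · obtain ⟨b, rfl⟩ := hy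
          rw [SimpleGraph.mem_neighborSet, key1 u b]
          simp only [Set.mem_union, Set.mem_image, Set.mem_diff]
          constructor
          · intro h; exact Or.inl ⟨b, h, rfl⟩
          · rintro (⟨b', hb', he⟩ | ⟨_, hr⟩)
            · rwa [hψi he] at hb'
            · exact absurd ⟨b, rfl⟩ hr
        · rw [SimpleGraph.mem_neighborSet, key2' (ψ u) y hy]
          simp only [Set.mem_union, Set.mem_image, Set.mem_diff]
          constructor
          · intro h; exact Or.inr ⟨h, hy⟩
          · rintro (⟨b', _, he⟩ | ⟨h, _⟩)
            · exact absurd ⟨b', he⟩ hy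
            · exact h
      have hGn : G₃.neighborSet (ψ u)
          = (ψ '' G₂'.neighborSet u) ∪ (G₃.neighborSet (ψ u) \ Set.range ψ) := by
        ext y
        by_cases hy : y ∈ Set.range ψ
        · obtain ⟨b, rfl⟩ := hy
          simp only [SimpleGraph.mem_neighborSet, Set.mem_union, Set.mem_image, Set.mem_diff]
          constructor
          · intro h
            exact Or.inl ⟨b, (hψa u b).mpr h, rfl⟩
          · rintro (⟨b', hb', he⟩ | ⟨h, _⟩)
            · rw [hψi he] at hb'
              exact (hψa u b).mp hb'
            · exact h
        · simp only [SimpleGraph.mem_neighborSet, Set.mem_union, Set.mem_image, Set.mem_diff]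
          constructor
          · intro h; exact Or.inr ⟨h, hy⟩
          · rintro (⟨b', _, he⟩ | ⟨h, _⟩)
            · exact absurd ⟨b', he⟩ hy
            · exact h
      have h1 : (H.neighborSet (ψ u)).ncard
          = (G₂.neighborSet u).ncard + (G₃.neighborSet (ψ u) \ Set.range ψ).ncard := by
        rw [hHn, Set.ncard_union_eq (hdisj _) (Set.toFinite _) (Set.toFinite _),
          Set.ncard_image_of_injective _ hψi]
      have h2 : (G₃.neighborSet (ψ u)).ncard
          = (G₂'.neighborSet u).ncard + (G₃.neighborSet (ψ u) \ Set.range ψ).ncard := by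
        conv_lhs => rw [hGn]
        rw [Set.ncard_union_eq (hdisj _) (Set.toFinite _) (Set.toFinite _),
          Set.ncard_image_of_injective _ hψi]
      rw [h1, (r₂ u).1, ← (r₂' u).1, ← h2, (r₃ (ψ u)).1]
    · have : H.neighborSet v = G₃.neighborSet v := by
        ext y
        exact key2 v y hv
      rw [this, (r₃ v).1]
  refine ⟨G₁, f₁, H, f₃, r₁, hrealH, ψ ∘ φ, hψi.comp hφi,
    fun x y => (hφa x y).trans (key1 (φ x) (φ y)).symm, fun x => ?_⟩
  have h2 : f₂ (φ x) = f₂' (φ x) := (r₂ (φ x)).2.trans (r₂' (φ x)).2.symm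
  exact le_trans (hφl x) (h2 ▸ hψl (φ x))
end

section
/- Let N be a fixed positive integer. If D₁, D₂, ... is an infinite sequence of graphic sequences such that no entry in any Dₖ exceeds N, then there exist indices i < j such that Dᵢ ≤ Dⱼ, i.e., there exist a graph G₁ realizing Dᵢ and a graph G₂ realizing Dⱼ such that G₁ is an induced subgraph of G₂. -/
/-- A graph `G` on `Fin D.length` realizes the integer sequence `D`:
the degree of the `i`-th vertex is the `i`-th entry of `D`. -/
def RealizesSeq (D : List ℕ) (G : SimpleGraph (Fin D.length)) : Prop :=
  ∀ i : Fin D.length, (G.neighborSet i).ncard = D.get i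

/-- The order on graphic sequences: `D₁ ≤ D₂` iff some realization of `D₁` is an induced
subgraph of some realization of `D₂`. -/
def SeqLE (D₁ D₂ : List ℕ) : Prop :=
  ∃ (G₁ : SimpleGraph (Fin D₁.length)) (G₂ : SimpleGraph (Fin D₂.length)),
    RealizesSeq D₁ G₁ ∧ RealizesSeq D₂ G₂ ∧
    ∃ φ : Fin D₁.length → Fin D₂.length, Function.Injective φ ∧
      ∀ x y : Fin D₁.length, G₁.Adj x y ↔ G₂.Adj (φ x) (φ y)

theorem card_fiber_get (L : List ℕ) (x : ℕ) :
    Fintype.card {t : Fin L.length // L.get t = x} = L.count x := by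
  rw [Fintype.card_subtype]
  have h1 : (L : Multiset ℕ) = Multiset.map L.get (Finset.univ : Finset (Fin L.length)).val := by
    conv_lhs => rw [← List.map_get_finRange L]
    rfl
  have h2 : L.count x = Multiset.count x (L : Multiset ℕ) := by simp
  rw [h2, h1, Multiset.count_map]
  rw [Finset.card_filter]
  rw [Finset.sum_congr rfl (fun t _ => (by simp [eq_comm] : ∀ t : Fin L.length,
    (if L.get t = x then 1 else 0) = if x = L.get t then 1 else 0) t)]
  rw [← Finset.card_filter]
  rfl

/-- Disjoint union of two simple graphs. -/
def sumGraph {α β : Type*} (G : SimpleGraph α) (H : SimpleGraph β) : SimpleGraph (α ⊕ β) where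
  Adj x y := match x, y with
    | .inl a, .inl b => G.Adj a b
    | .inr a, .inr b => H.Adj a b
    | _, _ => False
  symm := ⟨by rintro (a|a) (b|b) h <;> simp_all <;> exact h.symm⟩
  loopless := ⟨by rintro (a|a) h <;> simp_all⟩

/-- The gadget graph: for each `v : Fin N`, `q v` disjoint copies of the complete
graph on `v+2` vertices. Every vertex in the `v`-part has degree `v+1`. -/
def gadget (N : ℕ) (q : Fin N → ℕ) :
    SimpleGraph (Σ v : Fin N, Fin (q v) × Fin (v.1 + 2)) where
  Adj a b := a.1 = b.1 ∧ a.2.1.1 = b.2.1.1 ∧ a.2.2.1 ≠ b.2.2.1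
  symm := ⟨by rintro a b ⟨h1, h2, h3⟩; exact ⟨h1.symm, h2.symm, h3.symm⟩⟩
  loopless := ⟨by rintro a ⟨h1, h2, h3⟩; exact h3 rfl⟩

theorem gadget_neighborSet (N : ℕ) (q : Fin N → ℕ) (v : Fin N) (b : Fin (q v))
    (p : Fin (v.1 + 2)) :
    (gadget N q).neighborSet ⟨v, (b, p)⟩ =
      (fun r : Fin (v.1 + 2) => (⟨v, (b, r)⟩ : Σ v : Fin N, Fin (q v) × Fin (v.1+2))) '' {p}ᶜ := by
  ext ⟨w, c, r⟩
  constructor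
  · rintro ⟨h1, h2, h3⟩
    dsimp at h1 h2 h3
    cases h1
    obtain rfl : c = b := Fin.ext h2.symm
    refine ⟨r, ?_, rfl⟩
    simp only [Set.mem_compl_iff, Set.mem_singleton_iff]
    exact fun h => h3 (by rw [h])
  · rintro ⟨r', hr', h⟩
    simp only [Set.mem_compl_iff, Set.mem_singleton_iff] at hr'
    rw [← h]
    exact ⟨rfl, rfl, fun hh => hr' (Fin.ext hh.symm)⟩

theorem gadget_degree (N : ℕ) (q : Fin N → ℕ) (v : Fin N) (b : Fin (q v)) (p : Fin (v.1 + 2)) :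
    ((gadget N q).neighborSet ⟨v, (b, p)⟩).ncard = v.1 + 1 := by
  rw [gadget_neighborSet]
  rw [Set.ncard_image_of_injective _ (fun r s h => by
    simpa [Sigma.mk.inj_iff, Prod.ext_iff] using h)]
  rw [Set.ncard_eq_toFinset_card']
  simp [Finset.card_compl]

theorem sumGraph_neighborSet_inl {α β : Type*} (G : SimpleGraph α) (H : SimpleGraph β) (a : α) :
    (sumGraph G H).neighborSet (Sum.inl a) = Sum.inl '' G.neighborSet a := by
  ext (b|b)
  · simp [sumGraph, SimpleGraph.neighborSet]
  · simp [sumGraph, SimpleGraph.neighborSet]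

theorem sumGraph_neighborSet_inr {α β : Type*} (G : SimpleGraph α) (H : SimpleGraph β) (b : β) :
    (sumGraph G H).neighborSet (Sum.inr b) = Sum.inr '' H.neighborSet b := by
  ext (a|a)
  · simp [sumGraph, SimpleGraph.neighborSet]
  · simp [sumGraph, SimpleGraph.neighborSet]

theorem card_fiber_sum {α β : Type*} [Fintype α] [Fintype β] (f₁ : α → ℕ) (f₂ : β → ℕ) (x : ℕ) :
    Fintype.card {w : α ⊕ β // Sum.elim f₁ f₂ w = x}
      = Fintype.card {a // f₁ a = x} + Fintype.card {b // f₂ b = x} := by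
  rw [Fintype.card_congr (Equiv.subtypeSum (p := fun w => Sum.elim f₁ f₂ w = x))]
  exact Fintype.card_sum

theorem card_fiber_gadget (N : ℕ) (q : Fin N → ℕ) (x : ℕ) :
    Fintype.card {w : Σ v : Fin N, Fin (q v) × Fin (v.1+2) // w.1.1 + 1 = x}
      = ∑ v : Fin N, if v.1 + 1 = x then q v * (v.1 + 2) else 0 := by
  rw [Fintype.card_congr (Equiv.subtypeSigmaEquiv
    (fun v : Fin N => Fin (q v) × Fin (v.1+2)) (fun v => v.1 + 1 = x))]
  rw [Fintype.card_sigma]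
  have h1 : (Finset.univ : Finset (Subtype (fun v : Fin N => v.1 + 1 = x)))
      = Finset.univ.subtype _ := (Finset.subtype_univ _).symm
  rw [h1, Finset.sum_subtype_eq_sum_filter
    (fun v : Fin N => Fintype.card (Fin (q v) × Fin (v.1+2))), Finset.sum_filter]
  refine Finset.sum_congr rfl fun v _ => ?_
  by_cases h : v.1 + 1 = x <;> simp [h, mul_comm]

theorem seqLE_of_count (N : ℕ) (D₁ D₂ : List ℕ) (q : Fin N → ℕ)
    (G₁ : SimpleGraph (Fin D₁.length)) (h₁ : RealizesSeq D₁ G₁)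
    (hcount : ∀ x : ℕ, D₂.count x =
       D₁.count x + ∑ v : Fin N, if v.1 + 1 = x then q v * (v.1 + 2) else 0) :
    SeqLE D₁ D₂ := by
  classical
  set G : SimpleGraph (Fin D₁.length ⊕ Σ v : Fin N, Fin (q v) × Fin (v.1+2)) :=
    sumGraph G₁ (gadget N q) with hG
  have hdeg : ∀ w, (G.neighborSet w).ncard
      = Sum.elim (fun a => D₁.get a) (fun w : Σ v : Fin N, Fin (q v) × Fin (v.1+2) => w.1.1+1) w := by
    rintro (a | ⟨v, b, p⟩)
    · rw [hG, sumGraph_neighborSet_inl, Set.ncard_image_of_injective _ Sum.inl_injective]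
      exact h₁ a
    · rw [hG, sumGraph_neighborSet_inr, Set.ncard_image_of_injective _ Sum.inr_injective]
      exact gadget_degree N q v b p
  have hcard : ∀ x : ℕ, Fintype.card {t : Fin D₂.length // D₂.get t = x}
      = Fintype.card {w // Sum.elim (fun a => D₁.get a)
          (fun w : Σ v : Fin N, Fin (q v) × Fin (v.1+2) => w.1.1+1) w = x} := by
    intro x
    rw [card_fiber_get, card_fiber_sum, card_fiber_get, card_fiber_gadget, hcount x]
  set e : Fin D₂.length ≃ (Fin D₁.length ⊕ Σ v : Fin N, Fin (q v) × Fin (v.1+2)) :=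
    Equiv.ofFiberEquiv (fun x => Fintype.equivOfCardEq (hcard x)) with he_def
  have he : ∀ t, Sum.elim (fun a => D₁.get a)
      (fun w : Σ v : Fin N, Fin (q v) × Fin (v.1+2) => w.1.1+1) (e t) = D₂.get t :=
    fun t => Equiv.ofFiberEquiv_map _ t
  refine ⟨G₁, G.comap e, h₁, ?_, fun a => e.symm (Sum.inl a), ?_, ?_⟩
  · intro t
    have hns : (G.comap ⇑e).neighborSet t = ⇑e ⁻¹' G.neighborSet (e t) := rfl
    rw [hns, ← Equiv.image_symm_eq_preimage, Set.ncard_image_of_injective _ e.symm.injective,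
      hdeg, he]
  · exact fun a b hab => Sum.inl_injective (e.symm.injective hab)
  · intro x y
    show G₁.Adj x y ↔ G.Adj (e (e.symm (Sum.inl x))) (e (e.symm (Sum.inl y)))
    rw [Equiv.apply_symm_apply, Equiv.apply_symm_apply]
    exact Iff.rfl


/-- Bounded case of S. B. Rao's conjecture: if `D₁, D₂, …` are graphic sequences with no
entry exceeding `N`, then `Dᵢ ≤ Dⱼ` for some `i < j`. -/
theorem bounded_rao (N : ℕ) (hN : 0 < N)
    (D : ℕ → List ℕ)
    (hsorted : ∀ k, (D k).Pairwise (· ≥ ·))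
    (hpos : ∀ k, ∀ x ∈ D k, 1 ≤ x)
    (hgraphic : ∀ k, ∃ G : SimpleGraph (Fin (D k).length), RealizesSeq (D k) G)
    (hbound : ∀ k, ∀ x ∈ D k, x ≤ N) :
    ∃ i j : ℕ, i < j ∧ SeqLE (D i) (D j) := by
  classical
  set c : ℕ → Fin N → ℕ := fun k v => (D k).count (v.1 + 1) with hc
  obtain ⟨g, hg⟩ := (Set.isPWO_of_wellQuasiOrderedLE
    (Set.univ : Set (Fin N → ℕ))).exists_monotone_subseq
    (f := fun k => c k) (fun _ => Set.mem_univ _)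
  set R : ℕ → (Fin N → Fin (N + 2)) := fun t v =>
    ⟨c (g t) v % (v.1 + 2),
      lt_of_lt_of_le (Nat.mod_lt _ (by omega)) (by have := v.isLt; omega)⟩ with hR
  obtain ⟨y, hy⟩ := Finite.exists_infinite_fiber R
  obtain ⟨a, ha, b, hb, hab⟩ := (Set.infinite_coe_iff.mp hy).nontrivial
  wlog hlt : a < b generalizing a b
  · exact this b hb a ha (Ne.symm hab) (by omega)
  have hij : g a < g b := g.strictMono hlt
  have hmono : ∀ v, c (g a) v ≤ c (g b) v := fun v => hg (le_of_lt hlt) v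
  have hres : ∀ v : Fin N, c (g a) v % (v.1 + 2) = c (g b) v % (v.1 + 2) := by
    intro v
    have h1 : R a = R b := by rw [show R a = y from ha, show R b = y from hb]
    have := congrFun h1 v
    simpa [hR, Fin.ext_iff] using this
  set q : Fin N → ℕ := fun v => (c (g b) v - c (g a) v) / (v.1 + 2) with hq
  have hqm : ∀ v : Fin N, q v * (v.1 + 2) = c (g b) v - c (g a) v := by
    intro v
    exact Nat.div_mul_cancel ((Nat.modEq_iff_dvd' (hmono v)).mp (hres v))
  obtain ⟨G₁, hG₁⟩ := hgraphic (g a)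
  refine ⟨g a, g b, hij, seqLE_of_count N (D (g a)) (D (g b)) q G₁ hG₁ ?_⟩
  intro x
  by_cases hx : 1 ≤ x ∧ x ≤ N
  · set v₀ : Fin N := ⟨x - 1, by omega⟩ with hv₀
    have hx0 : v₀.1 + 1 = x := by simp only [hv₀]; omega
    have hsum : ∑ v : Fin N, (if v.1 + 1 = x then q v * (v.1 + 2) else 0)
        = q v₀ * (v₀.1 + 2) := by
      rw [Finset.sum_eq_single_of_mem v₀ (Finset.mem_univ _)
        (fun v _ hv => if_neg (fun h => hv (Fin.ext (by
          simp only [hv₀]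
          omega))))]
      rw [if_pos hx0]
    rw [hsum, hqm v₀]
    have h1 : c (g a) v₀ = (D (g a)).count x := by simp only [hc]; rw [hx0]
    have h2 : c (g b) v₀ = (D (g b)).count x := by simp only [hc]; rw [hx0]
    rw [← h1, ← h2]
    have := hmono v₀
    omega
  · have hza : (D (g a)).count x = 0 := by
      rw [List.count_eq_zero]
      intro hmem
      exact hx ⟨hpos _ x hmem, hbound _ x hmem⟩
    have hzb : (D (g b)).count x = 0 := by
      rw [List.count_eq_zero]
      intro hmem
      exact hx ⟨hpos _ x hmem, hbound _ x hmem⟩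
    have hsum : ∑ v : Fin N, (if v.1 + 1 = x then q v * (v.1 + 2) else 0) = 0 :=
      Finset.sum_eq_zero fun v _ => if_neg (by have := v.isLt; omega)
    rw [hza, hzb, hsum]
end
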